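/- Let α be a type and R ⊆ FreeGroup α a set of relators with 1 ∉ R. Assume that either α has at least two distinct elements, or there exist r, s ∈ R with s ≠ r and s ≠ r⁻¹. Then any two nontrivial elements of the normal closure of R are connected by a finite sequence of elementary moves that never passes through the identity: for all u, v ∈ Subgroup.normalClosure R with u ≠ 1 and v ≠ 1, Relation.ReflTransGen step01_R u v holds. -/

import Mathlib

/-- The elementary-move relation: `z` is obtained from `w` either by a
conjugation move by a generator (or its inverse), or by appending a relator
or an inverse relator on the right. -/
def StepR {α : Type*} (R : Set (FreeGroup α)) (w z : FreeGroup α) : Prop :=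
  (∃ a : α, z = FreeGroup.of a * w * (FreeGroup.of a)⁻¹ ∨
    z = (FreeGroup.of a)⁻¹ * w * FreeGroup.of a) ∨
  (∃ t : FreeGroup α, (t ∈ R ∨ t⁻¹ ∈ R) ∧ z = w * t)

/-- The identity-avoiding elementary-move relation. -/
def Step01R {α : Type*} (R : Set (FreeGroup α)) (w z : FreeGroup α) : Prop :=
  z ≠ 1 ∧ StepR R w z

namespace AvoidIdAux

open FreeGroup

/-! ### Word combinatorics in free groups -/

lemma cons_eq_append_const {β : Type*} :
    ∀ (L : List β) (x : β), x :: L = L ++ [x] → ∀ y ∈ L, y = x := by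
  intro L
  induction L with
  | nil => simp
  | cons z L ih =>
    intro x h y hy
    rw [List.cons_append] at h
    injection h with h1 h2
    subst h1
    rcases List.mem_cons.mp hy with rfl | hy
    · rfl
    · exact ih x h2 y hy

lemma invRev_append_singleton {α : Type*} (w : List (α × Bool)) (x : α × Bool) :
    FreeGroup.invRev (w ++ [x]) = (x.1, !x.2) :: FreeGroup.invRev w := by
  simp [FreeGroup.invRev]

lemma invRev_cons' {α : Type*} (w : List (α × Bool)) (y : α × Bool) :
    FreeGroup.invRev (y :: w) = FreeGroup.invRev w ++ [(y.1, !y.2)] := by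
  simp [FreeGroup.invRev]

lemma reduce_append_singleton {α : Type*} [DecidableEq α] (w : List (α × Bool)) (x : α × Bool) :
    reduce (w ++ [x]) = invRev (reduce ((x.1, !x.2) :: invRev w)) := by
  calc reduce (w ++ [x]) = invRev (invRev (reduce (w ++ [x]))) := (invRev_invRev).symm
    _ = invRev (reduce (invRev (w ++ [x]))) := by rw [reduce_invRev]
    _ = invRev (reduce ((x.1, !x.2) :: invRev w)) := by rw [invRev_append_singleton]

lemma reduce_cons_cancel {α : Type*} [DecidableEq α] (x : α) (b : Bool) (L : List (α × Bool))
    (h : reduce ((x, !b) :: L) = (x, !b) :: L) :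
    reduce ((x, b) :: (x, !b) :: L) = L := by
  rw [reduce.cons, h]
  exact if_pos ⟨rfl, (Bool.not_not b).symm⟩

lemma reduce_cons_nocancel {α : Type*} [DecidableEq α] (x y : α × Bool) (L : List (α × Bool))
    (h : reduce (y :: L) = y :: L) (hne : ¬(x.1 = y.1 ∧ x.2 = !y.2)) :
    reduce (x :: y :: L) = x :: y :: L := by
  rw [reduce.cons, h]
  exact if_neg hne

/-- An element of a free group commuting with a generator is a power of it. -/
lemma commute_imp_zpow {α : Type*} (a : α) (s : FreeGroup α)
    (h : FreeGroup.of a * s = s * FreeGroup.of a) : ∃ k : ℤ, s = FreeGroup.of a ^ k := by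
  classical
  suffices H : ∀ (n : ℕ) (s : FreeGroup α), s.toWord.length = n →
      FreeGroup.of a * s = s * FreeGroup.of a → ∃ k : ℤ, s = FreeGroup.of a ^ k from
    H _ s rfl h
  clear h s
  intro n
  induction n using Nat.strong_induction_on with
  | _ n ih =>
  intro s hlen h
  have hred : reduce s.toWord = s.toWord := reduce_toWord s
  rcases hsw : s.toWord with _ | ⟨⟨c, e⟩, t⟩
  · exact ⟨0, by rw [zpow_zero]; exact toWord_eq_nil_iff.mp hsw⟩
  · have hsmk : s = FreeGroup.mk ((c, e) :: t) := by rw [← hsw, mk_toWord]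
    have hredt : reduce ((c, e) :: t) = (c, e) :: t := by rw [← hsw, hred, hsw]
    by_cases hca : c = a
    · subst hca
      cases e
      · have h2 : (FreeGroup.of c * s).toWord = t := by
          have hmk : FreeGroup.of c * s = FreeGroup.mk ((c, true) :: (c, false) :: t) := by
            rw [hsmk, show FreeGroup.of c = FreeGroup.mk [(c, true)] from rfl, mul_mk]
            rfl
          rw [hmk, toWord_mk]
          exact reduce_cons_cancel c true t (by simpa using hredt)
        have hcomm : FreeGroup.of c * (FreeGroup.of c * s) =
            (FreeGroup.of c * s) * FreeGroup.of c := by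
          rw [mul_assoc, h]
        have hlt : t.length < n := by rw [← hlen, hsw]; simp
        obtain ⟨k, hk⟩ := ih t.length hlt _ (by rw [h2]) hcomm
        refine ⟨-1 + k, ?_⟩
        have hse : s = (FreeGroup.of c)⁻¹ * (FreeGroup.of c * s) := by group
        rw [hse, hk, zpow_add, zpow_neg_one]
      · have h2 : ((FreeGroup.of c)⁻¹ * s).toWord = t := by
          have hmk : (FreeGroup.of c)⁻¹ * s = FreeGroup.mk ((c, false) :: (c, true) :: t) := by
            rw [hsmk, show (FreeGroup.of c)⁻¹ = FreeGroup.mk [(c, false)] from rfl, mul_mk]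
            rfl
          rw [hmk, toWord_mk]
          exact reduce_cons_cancel c false t (by simpa using hredt)
        have hcomm : FreeGroup.of c * ((FreeGroup.of c)⁻¹ * s) =
            ((FreeGroup.of c)⁻¹ * s) * FreeGroup.of c := by
          rw [mul_assoc, ← h]
          group
        have hlt : t.length < n := by rw [← hlen, hsw]; simp
        obtain ⟨k, hk⟩ := ih t.length hlt _ (by rw [h2]) hcomm
        refine ⟨1 + k, ?_⟩
        have hse : s = FreeGroup.of c * ((FreeGroup.of c)⁻¹ * s) := by group
        rw [hse, hk, zpow_add, zpow_one]
    · exfalso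
      have hL : (FreeGroup.of a * s).toWord = (a, true) :: s.toWord := by
        have hmk : FreeGroup.of a * s = FreeGroup.mk ((a, true) :: s.toWord) := by
          conv_lhs => rw [← mk_toWord (x := s)]
          rw [show FreeGroup.of a = FreeGroup.mk [(a, true)] from rfl, mul_mk]
          rfl
        rw [hmk, toWord_mk, hsw]
        exact reduce_cons_nocancel (a, true) (c, e) t hredt (by simp [Ne.symm hca])
      have hR : (s * FreeGroup.of a).toWord = reduce (s.toWord ++ [(a, true)]) := by
        have hmk : s * FreeGroup.of a = FreeGroup.mk (s.toWord ++ [(a, true)]) := by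
          conv_lhs => rw [← mk_toWord (x := s)]
          rw [show FreeGroup.of a = FreeGroup.mk [(a, true)] from rfl, mul_mk]
        rw [hmk, toWord_mk]
      have heq : ((a : α), true) :: s.toWord = reduce (s.toWord ++ [(a, true)]) := by
        rw [← hL, ← hR, h]
      rw [reduce_append_singleton] at heq
      have hsimp : ((((a : α), true).1, !((a : α), true).2)) = ((a : α), false) := rfl
      rw [hsimp] at heq
      have hirred : reduce (invRev s.toWord) = invRev s.toWord := by
        rw [reduce_invRev, hred]
      rcases hiw : invRev s.toWord with _ | ⟨⟨d, g⟩, t₂⟩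
      · have h0 : s.toWord = [] := by
          have h0' := congrArg FreeGroup.invRev hiw
          rwa [invRev_invRev, invRev_empty] at h0'
        rw [hsw] at h0; exact List.cons_ne_nil _ _ h0
      · rw [hiw] at heq
        have hirred' : reduce ((d, g) :: t₂) = (d, g) :: t₂ := by rw [← hiw, hirred, hiw]
        have hlen2 : s.toWord.length = t₂.length + 1 := by
          rw [← invRev_length (L₁ := s.toWord), hiw]; simp
        by_cases hcan : d = a ∧ g = true
        · obtain ⟨h1, h2⟩ := hcan
          rw [h1, h2] at heq hirred'
          have hc : reduce (((a : α), false) :: (a, true) :: t₂) = t₂ := by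
            have := reduce_cons_cancel a false (t₂ : List (α × Bool)) (by simpa using hirred')
            simpa using this
          rw [hc] at heq
          have hl1 := congrArg List.length heq
          rw [invRev_length] at hl1
          simp at hl1
          omega
        · have hnc : reduce (((a : α), false) :: (d, g) :: t₂) =
              ((a : α), false) :: (d, g) :: t₂ := by
            refine reduce_cons_nocancel _ _ _ hirred' ?_
            rintro ⟨rfl, hg⟩
            exact hcan ⟨rfl, by simpa using hg.symm⟩
          rw [hnc] at heq
          have hfin : FreeGroup.invRev (((a : α), false) :: (d, g) :: t₂) =
              s.toWord ++ [(a, true)] := by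
            rw [invRev_cons', invRev_cons']
            have hrest : FreeGroup.invRev t₂ ++ [((d, g).1, !(d, g).2)] = s.toWord := by
              rw [← invRev_cons', ← hiw, invRev_invRev]
            rw [hrest]
            rfl
          rw [hfin] at heq
          have hconst := cons_eq_append_const s.toWord (a, true) heq (c, e)
            (by rw [hsw]; exact List.mem_cons_self)
          exact hca (congrArg Prod.fst hconst)

lemma addRight_zpow_apply (k p : ℤ) : ((Equiv.addRight (1 : ℤ)) ^ k) p = p + k := by
  induction k using Int.induction_on generalizing p with
  | zero => simp
  | succ n ihn =>
    rw [zpow_add_one, Equiv.Perm.mul_apply, ihn]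
    simp
    ring
  | pred n ihn =>
    rw [zpow_sub_one, Equiv.Perm.mul_apply]
    have hinv : ((Equiv.addRight (1 : ℤ))⁻¹) p = p - 1 := by
      simp [Equiv.Perm.inv_def]
      ring
    rw [hinv, ihn]
    ring

lemma pow_not_commute {α : Type*} {a b : α} (hab : a ≠ b) (k : ℤ) (hk : k ≠ 0) :
    FreeGroup.of b * FreeGroup.of a ^ k ≠ FreeGroup.of a ^ k * FreeGroup.of b := by
  classical
  intro h
  set x : Equiv.Perm ℤ := Equiv.addRight 1 with hx
  set y : Equiv.Perm ℤ := Equiv.neg ℤ with hy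
  set φ : FreeGroup α →* Equiv.Perm ℤ :=
    FreeGroup.lift (fun c => if c = a then x else if c = b then y else 1) with hφ
  have ha : φ (FreeGroup.of a) = x := by simp [hφ, FreeGroup.lift_apply_of]
  have hb : φ (FreeGroup.of b) = y := by simp [hφ, FreeGroup.lift_apply_of, hab.symm]
  have h2 := congrArg φ h
  simp only [_root_.map_mul, _root_.map_zpow, ha, hb] at h2
  have h3 := congrArg (fun e : Equiv.Perm ℤ => e 0) h2
  simp only [Equiv.Perm.mul_apply] at h3
  rw [hy] at h3
  rw [show (Equiv.neg ℤ) (0 : ℤ) = 0 by simp] at h3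
  rw [hx] at h3
  rw [addRight_zpow_apply] at h3
  rw [show (Equiv.neg ℤ) ((0 : ℤ) + k) = -(0 + k) by simp] at h3
  omega

/-- If there are two distinct generators, every nontrivial element of a free
group fails to be central. -/
lemma exists_conj_ne {α : Type*} {a b : α} (hab : a ≠ b) {s : FreeGroup α} (hs : s ≠ 1) :
    ∃ g : FreeGroup α, g * s * g⁻¹ ≠ s := by
  by_contra hcon
  push_neg at hcon
  have hca : FreeGroup.of a * s = s * FreeGroup.of a := by
    have := hcon (FreeGroup.of a)
    rw [mul_inv_eq_iff_eq_mul] at this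
    exact this
  have hcb : FreeGroup.of b * s = s * FreeGroup.of b := by
    have := hcon (FreeGroup.of b)
    rw [mul_inv_eq_iff_eq_mul] at this
    exact this
  obtain ⟨k, rfl⟩ := commute_imp_zpow a s hca
  have hk : k ≠ 0 := by rintro rfl; simp at hs
  exact pow_not_commute hab k hk hcb

/-! ### Path machinery -/

variable {α : Type*} {R : Set (FreeGroup α)}

lemma conj_ne_one {G : Type*} [Group G] {g w : G} (hw : w ≠ 1) : g * w * g⁻¹ ≠ 1 := by
  intro h
  apply hw
  calc w = g⁻¹ * (g * w * g⁻¹) * g := by group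
    _ = 1 := by rw [h]; group

lemma mem_inv_swap {t : FreeGroup α} (h : t ∈ R ∨ t⁻¹ ∈ R) : t⁻¹ ∈ R ∨ (t⁻¹)⁻¹ ∈ R := by
  rcases h with h | h
  · exact Or.inr (by simpa using h)
  · exact Or.inl h

lemma t_ne_one (h1R : (1 : FreeGroup α) ∉ R) {t : FreeGroup α} (ht : t ∈ R ∨ t⁻¹ ∈ R) :
    t ≠ 1 := by
  rintro rfl
  rcases ht with h | h
  · exact h1R h
  · rw [inv_one] at h; exact h1R h

lemma stepR_symm {w z : FreeGroup α} (h : StepR R w z) : StepR R z w := by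
  rcases h with ⟨a, h | h⟩ | ⟨t, ht, h⟩
  · exact Or.inl ⟨a, Or.inr (by rw [h]; group)⟩
  · exact Or.inl ⟨a, Or.inl (by rw [h]; group)⟩
  · exact Or.inr ⟨t⁻¹, mem_inv_swap ht, by rw [h]; group⟩

lemma rtg_conj (R : Set (FreeGroup α)) (g : FreeGroup α) : ∀ w : FreeGroup α, w ≠ 1 →
    Relation.ReflTransGen (Step01R R) w (g * w * g⁻¹) := by
  induction g using FreeGroup.induction_on with
  | C1 => intro w hw; simpa using Relation.ReflTransGen.refl
  | of a =>
    intro w hw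
    exact Relation.ReflTransGen.single ⟨conj_ne_one hw, Or.inl ⟨a, Or.inl rfl⟩⟩
  | inv_of a _ih =>
    intro w hw
    refine Relation.ReflTransGen.single ⟨conj_ne_one hw, Or.inl ⟨a, Or.inr ?_⟩⟩
    rw [inv_inv]
  | mul x y ihx ihy =>
    intro w hw
    have h1 := ihy w hw
    have h2 := ihx (y * w * y⁻¹) (conj_ne_one hw)
    rw [show x * (y * w * y⁻¹) * x⁻¹ = (x * y) * w * (x * y)⁻¹ by group] at h2
    exact h1.trans h2

lemma rtg_ne_one {u v : FreeGroup α} (h : Relation.ReflTransGen (Step01R R) u v)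
    (hu : u ≠ 1) : v ≠ 1 := by
  induction h with
  | refl => exact hu
  | tail _ hbc _ih => exact hbc.1

lemma rtg_symm {u v : FreeGroup α} (h : Relation.ReflTransGen (Step01R R) u v)
    (hu : u ≠ 1) : Relation.ReflTransGen (Step01R R) v u := by
  induction h with
  | refl => exact Relation.ReflTransGen.refl
  | tail hab hbc ih =>
    exact (Relation.ReflTransGen.single ⟨rtg_ne_one hab hu, stepR_symm hbc.2⟩).trans ih

lemma rtg_mul_rel {w t : FreeGroup α} (ht : t ∈ R ∨ t⁻¹ ∈ R) (h1 : w * t ≠ 1) :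
    Relation.ReflTransGen (Step01R R) w (w * t) :=
  Relation.ReflTransGen.single ⟨h1, Or.inr ⟨t, ht, rfl⟩⟩

lemma rtg_macro {w g t : FreeGroup α} (ht : t ∈ R ∨ t⁻¹ ∈ R) (hw : w ≠ 1)
    (hne : w * (g * t * g⁻¹) ≠ 1) :
    Relation.ReflTransGen (Step01R R) w (w * (g * t * g⁻¹)) := by
  have h1 := rtg_conj R g⁻¹ w hw
  rw [inv_inv] at h1
  have hx : (g⁻¹ * w * g) * t ≠ 1 := by
    intro h0
    apply hne
    calc w * (g * t * g⁻¹) = g * ((g⁻¹ * w * g) * t) * g⁻¹ := by group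
      _ = 1 := by rw [h0]; group
  have h2 : Relation.ReflTransGen (Step01R R) (g⁻¹ * w * g) ((g⁻¹ * w * g) * t) :=
    rtg_mul_rel ht hx
  have h3 := rtg_conj R g ((g⁻¹ * w * g) * t) hx
  rw [show g * ((g⁻¹ * w * g) * t) * g⁻¹ = w * (g * t * g⁻¹) by group] at h3
  exact (h1.trans h2).trans h3

/-- Moving from a nontrivial relator to a nontrivial relator whose product with it
is nontrivial. -/
lemma rtg_rel_step (h1R : (1 : FreeGroup α) ∉ R) {s s' : FreeGroup α}
    (hs : s ∈ R ∨ s⁻¹ ∈ R) (hs' : s' ∈ R ∨ s'⁻¹ ∈ R) (hss : s * s' ≠ 1) :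
    Relation.ReflTransGen (Step01R R) s s' := by
  have hs'ne := t_ne_one h1R hs'
  have p1 : Relation.ReflTransGen (Step01R R) s (s * s') := rtg_mul_rel hs' hss
  have p2 := rtg_conj R s⁻¹ (s * s') hss
  rw [show s⁻¹ * (s * s') * s⁻¹⁻¹ = s' * s by group] at p2
  have h3 : (s' * s) * s⁻¹ ≠ 1 := by
    rw [show (s' * s) * s⁻¹ = s' by group]
    exact hs'ne
  have p3 : Relation.ReflTransGen (Step01R R) (s' * s) ((s' * s) * s⁻¹) :=
    rtg_mul_rel (mem_inv_swap hs) h3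
  rw [show (s' * s) * s⁻¹ = s' by group] at p3
  exact (p1.trans p2).trans p3

/-- Moving from a nontrivial relator to its inverse, assuming the hypothesis. -/
lemma rtg_rel_inv (h1R : (1 : FreeGroup α) ∉ R)
    (hyp : (∃ a b : α, a ≠ b) ∨ (∃ r ∈ R, ∃ s ∈ R, s ≠ r ∧ s ≠ r⁻¹))
    {s : FreeGroup α} (hs : s ∈ R ∨ s⁻¹ ∈ R) :
    Relation.ReflTransGen (Step01R R) s s⁻¹ := by
  have hsne := t_ne_one h1R hs
  rcases hyp with ⟨a, b, hab⟩ | ⟨r, hr, s0, hs0, hne1, hne2⟩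
  · -- two generators : use a non-centralizing conjugator
    obtain ⟨g, hg⟩ := exists_conj_ne hab hsne
    have p1 := rtg_conj R g s hsne
    have hgs : g * s * g⁻¹ ≠ 1 := conj_ne_one hsne
    have h2ne : (g * s * g⁻¹) * s⁻¹ ≠ 1 := by
      intro h0
      exact hg (by rwa [mul_inv_eq_one] at h0)
    have p2 : Relation.ReflTransGen (Step01R R) (g * s * g⁻¹) ((g * s * g⁻¹) * s⁻¹) :=
      rtg_mul_rel (mem_inv_swap hs) h2ne
    have p3 := rtg_conj R (g * s)⁻¹ ((g * s * g⁻¹) * s⁻¹) h2ne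
    rw [show (g * s)⁻¹ * ((g * s * g⁻¹) * s⁻¹) * ((g * s)⁻¹)⁻¹ = g⁻¹ * s⁻¹ * g * s by group]
      at p3
    have h3ne : g⁻¹ * s⁻¹ * g * s ≠ 1 := by
      intro h0
      apply hg
      have hcomm : g * s = s * g := by
        calc g * s = (s * g) * (g⁻¹ * s⁻¹ * g * s) := by group
          _ = s * g := by rw [h0]; group
      rw [hcomm]
      group
    have h4ne : (g⁻¹ * s⁻¹ * g * s) * s⁻¹ ≠ 1 := by
      rw [show (g⁻¹ * s⁻¹ * g * s) * s⁻¹ = g⁻¹ * s⁻¹ * (g⁻¹)⁻¹ by group]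
      exact conj_ne_one (inv_ne_one.mpr hsne)
    have p4 : Relation.ReflTransGen (Step01R R) (g⁻¹ * s⁻¹ * g * s)
        ((g⁻¹ * s⁻¹ * g * s) * s⁻¹) := rtg_mul_rel (mem_inv_swap hs) h4ne
    have p5 := rtg_conj R g ((g⁻¹ * s⁻¹ * g * s) * s⁻¹) h4ne
    rw [show g * ((g⁻¹ * s⁻¹ * g * s) * s⁻¹) * g⁻¹ = s⁻¹ by group] at p5
    exact (((p1.trans p2).trans p3).trans p4).trans p5
  · -- two essentially different relators
    have hinv : s⁻¹ ∈ R ∨ (s⁻¹)⁻¹ ∈ R := mem_inv_swap hs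
    by_cases hcase : s = r ∨ s = r⁻¹ ∨ s⁻¹ = r ∨ s⁻¹ = r⁻¹
    · -- use s0 as intermediate stop
      have hts : s0 ≠ s⁻¹ := by
        intro h0
        rcases hcase with h | h | h | h
        · exact hne2 (by rw [h0, h])
        · exact hne1 (by rw [h0, h, inv_inv])
        · exact hne1 (by rw [h0, h])
        · exact hne2 (by rw [h0, h])
      have hts' : s0 ≠ s := by
        intro h0
        rcases hcase with h | h | h | h
        · exact hne1 (by rw [h0, h])
        · exact hne2 (by rw [h0, h])
        · exact hne2 (by rw [h0, ← inv_inv s, h])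
        · exact hne1 (by rw [h0, inv_injective h])
      have q1 : Relation.ReflTransGen (Step01R R) s s0 := by
        refine rtg_rel_step h1R hs (Or.inl hs0) ?_
        intro h0
        exact hts (inv_eq_of_mul_eq_one_right h0).symm
      have q2 : Relation.ReflTransGen (Step01R R) s0 s⁻¹ := by
        refine rtg_rel_step h1R (Or.inl hs0) hinv ?_
        intro h0
        exact hts' (by rwa [mul_inv_eq_one] at h0)
      exact q1.trans q2
    · push_neg at hcase
      obtain ⟨hc1, hc2, hc3, hc4⟩ := hcase
      have q1 : Relation.ReflTransGen (Step01R R) s r := by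
        refine rtg_rel_step h1R hs (Or.inl hr) ?_
        intro h0
        exact hc3 (inv_eq_of_mul_eq_one_right h0)
      have q2 : Relation.ReflTransGen (Step01R R) r s⁻¹ := by
        refine rtg_rel_step h1R (Or.inl hr) hinv ?_
        intro h0
        rw [mul_inv_eq_one] at h0
        exact hc1 h0.symm
      exact q1.trans q2

/-- Moving between any two nontrivial relators. -/
lemma rtg_relators (h1R : (1 : FreeGroup α) ∉ R)
    (hyp : (∃ a b : α, a ≠ b) ∨ (∃ r ∈ R, ∃ s ∈ R, s ≠ r ∧ s ≠ r⁻¹))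
    {s s' : FreeGroup α} (hs : s ∈ R ∨ s⁻¹ ∈ R) (hs' : s' ∈ R ∨ s'⁻¹ ∈ R) :
    Relation.ReflTransGen (Step01R R) s s' := by
  by_cases hss : s * s' = 1
  · have hseq : s' = s⁻¹ := (inv_eq_of_mul_eq_one_right hss).symm
    rw [hseq]
    exact rtg_rel_inv h1R hyp hs
  · exact rtg_rel_step h1R hs hs' hss

/-- Walking along a product of conjugates of relators, avoiding the identity. -/
lemma rtg_prod (h1R : (1 : FreeGroup α) ∉ R)
    (hyp : (∃ a b : α, a ≠ b) ∨ (∃ r ∈ R, ∃ s ∈ R, s ≠ r ∧ s ≠ r⁻¹)) :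
    ∀ (n : ℕ) (l : List (FreeGroup α)), l.length = n →
      (∀ x ∈ l, ∃ g t, (t ∈ R ∨ t⁻¹ ∈ R) ∧ x = g * t * g⁻¹) →
      ∀ w : FreeGroup α, w ≠ 1 → w * l.prod ≠ 1 →
      Relation.ReflTransGen (Step01R R) w (w * l.prod) := by
  intro n
  induction n using Nat.strong_induction_on with
  | _ n ih =>
  intro l hlen hl w hw hprod
  rcases l with _ | ⟨x, l'⟩
  · simpa using Relation.ReflTransGen.refl
  obtain ⟨g, t, ht, rfl⟩ := hl x List.mem_cons_self
  by_cases hwx : w * (g * t * g⁻¹) = 1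
  · rcases l' with _ | ⟨y, l''⟩
    · exact absurd (by simpa using hwx) hprod
    obtain ⟨g2, t2, ht2, rfl⟩ := hl y (by simp)
    have ht2ne : t2 ≠ 1 := t_ne_one h1R ht2
    have hyne : g2 * t2 * g2⁻¹ ≠ 1 := conj_ne_one ht2ne
    -- from w to t⁻¹ by conjugation
    have hweq : w = g * t⁻¹ * g⁻¹ := by
      have := eq_inv_of_mul_eq_one_left hwx
      rw [this]
      group
    have p1 := rtg_conj R g⁻¹ w hw
    rw [show g⁻¹ * w * g⁻¹⁻¹ = g⁻¹ * w * g by rw [inv_inv], hweq,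
      show g⁻¹ * (g * t⁻¹ * g⁻¹) * g = t⁻¹ by group, ← hweq] at p1
    -- from t⁻¹ to t2
    have p2 : Relation.ReflTransGen (Step01R R) t⁻¹ t2 :=
      rtg_relators h1R hyp (mem_inv_swap ht) ht2
    -- from t2 to y
    have p3 := rtg_conj R g2 t2 ht2ne
    -- from y onward by induction
    have hprodeq : w * ((g * t * g⁻¹) :: (g2 * t2 * g2⁻¹) :: l'').prod =
        (g2 * t2 * g2⁻¹) * l''.prod := by
      rw [List.prod_cons, List.prod_cons, ← mul_assoc, ← mul_assoc, hwx, one_mul]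
    have p4 : Relation.ReflTransGen (Step01R R) (g2 * t2 * g2⁻¹)
        ((g2 * t2 * g2⁻¹) * l''.prod) := by
      refine ih l''.length (by rw [← hlen]; simp only [List.length_cons]; omega) l'' rfl
        (fun z hz => hl z (by simp [hz])) _ hyne ?_
      rw [← hprodeq]
      exact hprod
    rw [hprodeq]
    exact ((p1.trans p2).trans p3).trans p4
  · have p1 : Relation.ReflTransGen (Step01R R) w (w * (g * t * g⁻¹)) :=
      rtg_macro ht hw hwx
    have hassoc : (w * (g * t * g⁻¹)) * l'.prod = w * ((g * t * g⁻¹) :: l').prod := by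
      rw [List.prod_cons, mul_assoc]
    have p2 : Relation.ReflTransGen (Step01R R) (w * (g * t * g⁻¹))
        ((w * (g * t * g⁻¹)) * l'.prod) := by
      refine ih l'.length (by rw [← hlen]; simp only [List.length_cons]; omega) l' rfl
        (fun z hz => hl z (by simp [hz])) _ hwx ?_
      rw [hassoc]
      exact hprod
    rw [hassoc] at p2
    exact p1.trans p2

/-- Every element of the normal closure is a product of conjugates of relators
or inverse relators. -/
lemma exists_conj_list {u : FreeGroup α} (hu : u ∈ Subgroup.normalClosure R) :
    ∃ l : List (FreeGroup α),
      (∀ x ∈ l, ∃ g t, (t ∈ R ∨ t⁻¹ ∈ R) ∧ x = g * t * g⁻¹) ∧ l.prod = u := by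
  have h1 : u ∈ (Subgroup.closure (Group.conjugatesOfSet R)).toSubmonoid := hu
  rw [Subgroup.closure_toSubmonoid] at h1
  obtain ⟨l, hl, rfl⟩ := Submonoid.exists_list_of_mem_closure h1
  refine ⟨l, ?_, rfl⟩
  intro x hx
  rcases hl x hx with hx1 | hx1
  · obtain ⟨r, hr, hconj⟩ := Group.mem_conjugatesOfSet_iff.mp hx1
    obtain ⟨c, hc⟩ := isConj_iff.mp hconj
    exact ⟨c, r, Or.inl hr, hc.symm⟩
  · rw [Set.mem_inv] at hx1
    obtain ⟨r, hr, hconj⟩ := Group.mem_conjugatesOfSet_iff.mp hx1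
    obtain ⟨c, hc⟩ := isConj_iff.mp hconj
    refine ⟨c, r⁻¹, Or.inr (by simpa using hr), ?_⟩
    have h2 := congrArg (fun z : FreeGroup α => z⁻¹) hc
    simp only [inv_inv] at h2
    rw [← h2]
    group

end AvoidIdAux

/-- If `1 ∉ R` and either there are at least two generators or `R` contains
two essentially different relators, then any two nontrivial elements of the
normal closure of `R` are connected by a finite sequence of elementary moves
avoiding the identity. -/
theorem irreducible_avoiding_identity {α : Type*} (R : Set (FreeGroup α))
    (h1R : (1 : FreeGroup α) ∉ R)
    (hyp : (∃ a b : α, a ≠ b) ∨ (∃ r ∈ R, ∃ s ∈ R, s ≠ r ∧ s ≠ r⁻¹)) :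
    ∀ u ∈ Subgroup.normalClosure R, ∀ v ∈ Subgroup.normalClosure R,
      u ≠ 1 → v ≠ 1 → Relation.ReflTransGen (Step01R R) u v := by
  classical
  intro u hu v hv hu1 hv1
  obtain ⟨lu, hlu, hpu⟩ := AvoidIdAux.exists_conj_list hu
  obtain ⟨lv, hlv, hpv⟩ := AvoidIdAux.exists_conj_list hv
  rcases lu with _ | ⟨x, lu'⟩
  · exact absurd (by simpa using hpu.symm) hu1
  obtain ⟨g0, t0, ht0, hx⟩ := hlu x List.mem_cons_self
  have ht0ne : t0 ≠ 1 := AvoidIdAux.t_ne_one h1R ht0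
  have hmemt0inv : ∃ g t, (t ∈ R ∨ t⁻¹ ∈ R) ∧ t0⁻¹ = g * t * g⁻¹ :=
    ⟨1, t0⁻¹, AvoidIdAux.mem_inv_swap ht0, by group⟩
  -- path from t0 to u
  have pu : Relation.ReflTransGen (Step01R R) t0 u := by
    have heq : t0 * (t0⁻¹ :: (x :: lu')).prod = u := by
      rw [List.prod_cons, hpu, ← mul_assoc, mul_inv_cancel, one_mul]
    have p := AvoidIdAux.rtg_prod h1R hyp (t0⁻¹ :: (x :: lu')).length
      (t0⁻¹ :: (x :: lu')) rfl ?_ t0 ht0ne (by rw [heq]; exact hu1)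
    · rwa [heq] at p
    · intro z hz
      rcases List.mem_cons.mp hz with rfl | hz
      · exact hmemt0inv
      · exact hlu z hz
  -- path from t0 to v
  have pv : Relation.ReflTransGen (Step01R R) t0 v := by
    have heq : t0 * (t0⁻¹ :: lv).prod = v := by
      rw [List.prod_cons, hpv, ← mul_assoc, mul_inv_cancel, one_mul]
    have p := AvoidIdAux.rtg_prod h1R hyp (t0⁻¹ :: lv).length
      (t0⁻¹ :: lv) rfl ?_ t0 ht0ne (by rw [heq]; exact hv1)
    · rwa [heq] at p
    · intro z hz
      rcases List.mem_cons.mp hz with rfl | hz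
      · exact hmemt0inv
      · exact hlv z hz
  exact (AvoidIdAux.rtg_symm pu ht0ne).trans pv
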